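/- Let α₁, α₂ > 0 with α₁ < α₂ and 𝔞 := α₁ - α₂ + 1 > 0, c₁ > 0, c₂ ∈ ℝ, and let (μ_n) be positive with μ_n = c₁ n^{-α₁} + c₂ n^{-α₂} + o(n^{-α₂}). Then ∑_{n=1}^d log(μ_n/μ_d) = (α₁/ln 2) d + ((1/𝔞) - 1)(c₂/(c₁ ln 2)) d^𝔞 + o(d^𝔞) as d→∞. -/

import Mathlib

open Filter Asymptotics Topology


private lemma antitoneOn_rpow_neg {β : ℝ} (hβ : 0 < β) {c : ℝ} :
    AntitoneOn (fun x : ℝ => x ^ (-β)) (Set.Icc 1 c) := fun x hx _y _hy hxy =>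
  Real.rpow_le_rpow_of_nonpos (lt_of_lt_of_le one_pos hx.1) hxy (neg_nonpos.mpr hβ.le)

private lemma integral_rpow_neg {β : ℝ} (hβ1 : β < 1) (d : ℕ) :
    ∫ x in (1:ℝ)..(d:ℝ), x ^ (-β) = ((d:ℝ) ^ (1 - β) - 1) / (1 - β) := by
  rw [integral_rpow (Or.inl (by linarith))]
  norm_num
  rw [show -β + 1 = 1 - β by ring]

private lemma icc_eq_ico_succ (d : ℕ) : Finset.Icc 1 d = Finset.Ico 1 (d + 1) :=
  (Finset.Ico_add_one_right_eq_Icc 1 d).symm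

private lemma sum_icc_split (f : ℕ → ℝ) {d : ℕ} (hd : 1 ≤ d) :
    ∑ n ∈ Finset.Icc 1 d, f n = f 1 + ∑ i ∈ Finset.Ico 1 d, f (i + 1) := by
  rw [icc_eq_ico_succ, Finset.sum_eq_sum_Ico_succ_bot (by omega), Finset.sum_Ico_add' f 1 d 1]

private lemma sum_icc_split_top (f : ℕ → ℝ) {d : ℕ} (hd : 1 ≤ d) :
    ∑ n ∈ Finset.Icc 1 d, f n = (∑ i ∈ Finset.Ico 1 d, f i) + f d := by
  rw [icc_eq_ico_succ, Finset.sum_Ico_succ_top hd]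

private lemma sum_rpow_le {β : ℝ} (hβ0 : 0 < β) (hβ1 : β < 1) {d : ℕ} (hd : 1 ≤ d) :
    ∑ n ∈ Finset.Icc 1 d, ((n:ℝ)) ^ (-β) ≤ 1 + ((d:ℝ) ^ (1 - β) - 1) / (1 - β) := by
  have key := AntitoneOn.sum_le_integral_Ico hd (f := fun x : ℝ => x ^ (-β))
    (by simpa using antitoneOn_rpow_neg hβ0 (c := (d:ℝ)))
  simp only [Nat.cast_one] at key
  rw [integral_rpow_neg hβ1] at key
  rw [sum_icc_split (fun n : ℕ => ((n:ℝ)) ^ (-β)) hd]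
  push_cast
  push_cast at key
  norm_num
  convert key using 2

private lemma le_sum_rpow {β : ℝ} (hβ0 : 0 < β) (hβ1 : β < 1) {d : ℕ} (hd : 1 ≤ d) :
    ((d:ℝ) ^ (1 - β) - 1) / (1 - β) ≤ ∑ n ∈ Finset.Icc 1 d, ((n:ℝ)) ^ (-β) := by
  have key := AntitoneOn.integral_le_sum_Ico hd (f := fun x : ℝ => x ^ (-β))
    (by simpa using antitoneOn_rpow_neg hβ0 (c := (d:ℝ)))
  simp only [Nat.cast_one] at key
  rw [integral_rpow_neg hβ1] at key
  rw [sum_icc_split_top (fun n : ℕ => ((n:ℝ)) ^ (-β)) hd]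
  have : (0:ℝ) ≤ ((d:ℝ)) ^ (-β) := Real.rpow_nonneg (by positivity) _
  refine key.trans ?_
  linarith

private lemma monotoneOn_log {c : ℝ} : MonotoneOn Real.log (Set.Icc 1 c) :=
  fun x hx _y _hy hxy => Real.log_le_log (lt_of_lt_of_le one_pos hx.1) hxy

private lemma sum_log_bounds {d : ℕ} (hd : 1 ≤ d) :
    (d:ℝ) * Real.log d - d + 1 ≤ ∑ n ∈ Finset.Icc 1 d, Real.log n ∧
    ∑ n ∈ Finset.Icc 1 d, Real.log n ≤ (d:ℝ) * Real.log d - d + 1 + Real.log d := by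
  have hint : ∫ x in (1:ℝ)..(d:ℝ), Real.log x = (d:ℝ) * Real.log d - d + 1 := by
    rw [integral_log]
    · simp
  constructor
  · have key := MonotoneOn.integral_le_sum_Ico hd (f := Real.log)
      (by simpa using monotoneOn_log (c := (d:ℝ)))
    simp only [Nat.cast_one] at key
    rw [hint] at key
    rw [sum_icc_split (fun n : ℕ => Real.log n) hd]
    simp only [Nat.cast_one, Real.log_one, zero_add]
    exact key
  · have key := MonotoneOn.sum_le_integral_Ico hd (f := Real.log)
      (by simpa using monotoneOn_log (c := (d:ℝ)))
    simp only [Nat.cast_one] at key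
    rw [hint] at key
    rw [sum_icc_split_top (fun n : ℕ => Real.log n) hd]
    linarith

private lemma one_add_log_littleo {a : ℝ} (ha : 0 < a) :
    (fun d : ℕ => 1 + Real.log d) =o[atTop] fun d : ℕ => (d:ℝ) ^ a := by
  have hlog : (fun d : ℕ => Real.log d) =o[atTop] fun d : ℕ => (d:ℝ) ^ a :=
    (isLittleO_log_rpow_atTop ha).comp_tendsto tendsto_natCast_atTop_atTop
  have hconst : (fun _ : ℕ => (1:ℝ)) =o[atTop] fun d : ℕ => (d:ℝ) ^ a := by
    rw [isLittleO_const_left]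
    right
    have : Tendsto (fun d : ℕ => (d:ℝ) ^ a) atTop atTop :=
      (tendsto_rpow_atTop ha).comp tendsto_natCast_atTop_atTop
    exact tendsto_abs_atTop_atTop.comp this
  exact hconst.add hlog

private lemma bounded_littleo_rpow {a : ℝ} (ha : 0 < a) {E : ℕ → ℝ} {C : ℝ}
    (hE : ∀ᶠ d : ℕ in atTop, |E d| ≤ C) :
    E =o[atTop] fun d : ℕ => (d:ℝ) ^ a := by
  refine IsBigO.trans_isLittleO ?_ (one_add_log_littleo ha)
  rw [isBigO_iff]
  refine ⟨C, ?_⟩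
  filter_upwards [hE, eventually_ge_atTop 1] with d hd hd1
  have h1 : (1:ℝ) ≤ 1 + Real.log d := by
    have : (0:ℝ) ≤ Real.log d := Real.log_nonneg (by exact_mod_cast hd1)
    linarith
  have hC : 0 ≤ C := le_trans (abs_nonneg _) hd
  calc ‖E d‖ = |E d| := rfl
    _ ≤ C := hd
    _ ≤ C * ‖1 + Real.log d‖ := by
        rw [Real.norm_eq_abs, abs_of_nonneg (by linarith)]
        nlinarith

private lemma sum_littleo {β : ℝ} (hβ0 : 0 < β) (hβ1 : β < 1) {e : ℕ → ℝ}
    (he : e =o[atTop] fun n : ℕ => (n:ℝ) ^ (-β)) :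
    (fun d : ℕ => ∑ n ∈ Finset.Icc 1 d, e n) =o[atTop] fun d : ℕ => (d:ℝ) ^ (1 - β) := by
  have ha : 0 < 1 - β := by linarith
  rw [isLittleO_iff]
  intro ε hε
  have hc : 0 < ε * (1 - β) / 4 := by positivity
  obtain ⟨N, hN⟩ := eventually_atTop.mp (he.def hc)
  set N' := max N 1 with hN'
  set C := ∑ n ∈ Finset.Icc 1 N', |e n| with hC
  have hCevt : ∀ᶠ d : ℕ in atTop, 2 * C / ε ≤ (d:ℝ) ^ (1 - β) :=
    ((tendsto_rpow_atTop ha).comp tendsto_natCast_atTop_atTop).eventually_ge_atTop _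
  filter_upwards [hCevt, eventually_ge_atTop (N' + 1)] with d hd1 hd2
  have hd1' : (1:ℕ) ≤ d := le_trans (by omega) hd2
  have hdR : (1:ℝ) ≤ (d:ℝ) := by exact_mod_cast hd1'
  have hP1 : (1:ℝ) ≤ (d:ℝ) ^ (1 - β) := by
    calc (1:ℝ) = (1:ℝ) ^ (1 - β) := (Real.one_rpow _).symm
      _ ≤ (d:ℝ) ^ (1 - β) := Real.rpow_le_rpow zero_le_one hdR ha.le
  have hsplit : Finset.Icc 1 d = Finset.Icc 1 N' ∪ Finset.Ioc N' d := by
    ext n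
    simp only [Finset.mem_Icc, Finset.mem_union, Finset.mem_Ioc]
    omega
  have hdisj : Disjoint (Finset.Icc 1 N') (Finset.Ioc N' d) := by
    rw [Finset.disjoint_left]
    intro n hn hn'
    simp only [Finset.mem_Icc, Finset.mem_Ioc] at hn hn'
    omega
  have hsum : ∑ n ∈ Finset.Icc 1 d, e n
      = (∑ n ∈ Finset.Icc 1 N', e n) + ∑ n ∈ Finset.Ioc N' d, e n := by
    rw [hsplit, Finset.sum_union hdisj]
  have hbound2 : ‖∑ n ∈ Finset.Ioc N' d, e n‖ ≤ ε / 4 * (d:ℝ) ^ (1 - β) := by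
    calc ‖∑ n ∈ Finset.Ioc N' d, e n‖ ≤ ∑ n ∈ Finset.Ioc N' d, ‖e n‖ := norm_sum_le _ _
      _ ≤ ∑ n ∈ Finset.Ioc N' d, ε * (1 - β) / 4 * ((n:ℝ)) ^ (-β) := by
          refine Finset.sum_le_sum fun n hn => ?_
          rw [Finset.mem_Ioc] at hn
          have := hN n (le_trans (le_max_left N 1) hn.1.le)
          rwa [Real.norm_eq_abs ((n:ℝ) ^ (-β)),
            abs_of_nonneg (Real.rpow_nonneg (Nat.cast_nonneg n) _)] at this
      _ = ε * (1 - β) / 4 * ∑ n ∈ Finset.Ioc N' d, ((n:ℝ)) ^ (-β) := by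
          rw [Finset.mul_sum]
      _ ≤ ε * (1 - β) / 4 * ∑ n ∈ Finset.Icc 1 d, ((n:ℝ)) ^ (-β) := by
          refine mul_le_mul_of_nonneg_left ?_ hc.le
          refine Finset.sum_le_sum_of_subset_of_nonneg ?_
            (fun n _ _ => Real.rpow_nonneg (Nat.cast_nonneg n) _)
          intro n hn
          simp only [Finset.mem_Ioc, Finset.mem_Icc] at hn ⊢
          omega
      _ ≤ ε * (1 - β) / 4 * (1 + ((d:ℝ) ^ (1 - β) - 1) / (1 - β)) :=
          mul_le_mul_of_nonneg_left (sum_rpow_le hβ0 hβ1 hd1') hc.le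
      _ ≤ ε / 4 * (d:ℝ) ^ (1 - β) := by
          have h2 : (1 - β) * (1 + ((d:ℝ) ^ (1 - β) - 1) / (1 - β)) = (d:ℝ) ^ (1 - β) - β := by
            field_simp
            ring
          nlinarith [hε.le, hβ0]
  have hCb : C ≤ ε / 2 * (d:ℝ) ^ (1 - β) := by
    rw [div_le_iff₀ hε] at hd1
    linarith
  have hCnorm : ‖∑ n ∈ Finset.Icc 1 N', e n‖ ≤ C := by
    simpa [hC] using norm_sum_le (Finset.Icc 1 N') e
  calc ‖∑ n ∈ Finset.Icc 1 d, e n‖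
      ≤ ‖∑ n ∈ Finset.Icc 1 N', e n‖ + ‖∑ n ∈ Finset.Ioc N' d, e n‖ := by
        rw [hsum]; exact norm_add_le _ _
    _ ≤ ε / 2 * (d:ℝ) ^ (1 - β) + ε / 4 * (d:ℝ) ^ (1 - β) :=
        add_le_add (hCnorm.trans hCb) hbound2
    _ ≤ ε * ‖(d:ℝ) ^ (1 - β)‖ := by
        rw [Real.norm_eq_abs, abs_of_nonneg (by positivity)]
        nlinarith

theorem stmt8 (α₁ α₂ c₁ c₂ : ℝ) (h1 : 0 < α₁) (h2 : 0 < α₂) (h12 : α₁ < α₂)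
    (hfa : 0 < α₁ - α₂ + 1) (hc1 : 0 < c₁)
    (μ : ℕ → ℝ) (hpos : ∀ n, 0 < μ n)
    (hμ : (fun n : ℕ => μ n - (c₁ * (n : ℝ) ^ (-α₁) + c₂ * (n : ℝ) ^ (-α₂)))
      =o[atTop] fun n : ℕ => (n : ℝ) ^ (-α₂)) :
    (fun d : ℕ =>
        (∑ n ∈ Finset.Icc 1 d, Real.logb 2 (μ n / μ d)) -
          ((α₁ / Real.log 2) * d +
            (1 / (α₁ - α₂ + 1) - 1) * (c₂ / (c₁ * Real.log 2)) * (d : ℝ) ^ (α₁ - α₂ + 1)))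
      =o[atTop] fun d : ℕ => (d : ℝ) ^ (α₁ - α₂ + 1) := by
  have hβ0 : 0 < α₂ - α₁ := sub_pos.mpr h12
  have hβ1 : α₂ - α₁ < 1 := by linarith
  rw [show α₁ - α₂ + 1 = 1 - (α₂ - α₁) by ring]
  set β := α₂ - α₁ with hβdef
  have ha : 0 < 1 - β := by linarith
  set r : ℕ → ℝ := fun n =>
    Real.log (μ n) - (Real.log c₁ - α₁ * Real.log n + (c₂ / c₁) * (n:ℝ) ^ (-β)) with hrdef
  set t : ℕ → ℝ := fun n => μ n / (c₁ * (n:ℝ) ^ (-α₁)) - 1 with htdef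
  -- the error term of t
  have hterr : (fun n : ℕ => t n - (c₂ / c₁) * (n:ℝ) ^ (-β)) =o[atTop]
      fun n : ℕ => (n:ℝ) ^ (-β) := by
    have h0 : (fun n : ℕ => (μ n - (c₁ * (n:ℝ) ^ (-α₁) + c₂ * (n:ℝ) ^ (-α₂)))
        * ((n:ℝ) ^ α₁ / c₁)) =o[atTop] fun n : ℕ => (n:ℝ) ^ (-α₂) * ((n:ℝ)^ α₁ / c₁) :=
      hμ.mul_isBigO (isBigO_refl _ _)
    have h1 : (fun n : ℕ => (n:ℝ) ^ (-α₂) * ((n:ℝ) ^ α₁ / c₁)) =O[atTop]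
        fun n : ℕ => (n:ℝ) ^ (-β) := by
      rw [isBigO_iff]
      refine ⟨1 / c₁, ?_⟩
      filter_upwards [eventually_ge_atTop 1] with n hn
      have hnpos : (0:ℝ) < n := by exact_mod_cast hn
      have : (n:ℝ) ^ (-α₂) * ((n:ℝ) ^ α₁ / c₁) = (n:ℝ) ^ (-β) / c₁ := by
        rw [show -β = -α₂ + α₁ by rw [hβdef]; ring, Real.rpow_add hnpos]
        ring
      rw [this, Real.norm_eq_abs, Real.norm_eq_abs, abs_div, abs_of_nonneg hc1.le]
      rw [div_eq_mul_inv, mul_comm (1/c₁), one_div, abs_of_nonneg (by positivity)]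
    refine (IsLittleO.trans_isBigO h0 h1).congr' ?_ EventuallyEq.rfl
    filter_upwards [eventually_ge_atTop 1] with n hn
    have hnpos : (0:ℝ) < n := by exact_mod_cast hn
    have hpow : (n:ℝ) ^ (-α₂) * (n:ℝ) ^ α₁ = (n:ℝ) ^ (-β) := by
      rw [← Real.rpow_add hnpos, show -α₂ + α₁ = -β by rw [hβdef]; ring]
    have h1' : (n:ℝ) ^ (-α₁) * (n:ℝ) ^ α₁ = 1 := by
      rw [← Real.rpow_add hnpos]
      simp
    have hrw : t n = μ n * (n:ℝ) ^ α₁ / c₁ - 1 := by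
      simp only [htdef]
      rw [Real.rpow_neg hnpos.le]
      rw [Real.rpow_neg hnpos.le] at h1'
      field_simp
    rw [hrw]
    field_simp
    linear_combination (-c₁ : ℝ) * h1' - c₂ * hpow
  have htO : t =O[atTop] fun n : ℕ => (n:ℝ) ^ (-β) := by
    have hs : (fun n : ℕ => (c₂ / c₁) * (n:ℝ) ^ (-β)) =O[atTop] (fun n : ℕ => (n:ℝ) ^ (-β)) :=
      (isBigO_refl _ _).const_mul_left _
    have := hterr.isBigO.add hs
    refine this.congr' ?_ EventuallyEq.rfl
    filter_upwards with n
    ring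
  have htend : Tendsto (fun n : ℕ => (n:ℝ) ^ (-β)) atTop (𝓝 0) :=
    (tendsto_rpow_neg_atTop hβ0).comp tendsto_natCast_atTop_atTop
  have ht0 : Tendsto t atTop (𝓝 0) := htO.trans_tendsto htend
  have hD : HasDerivAt (fun x : ℝ => Real.log (1 + x)) 1 0 := by
    have := (Real.hasDerivAt_log (by norm_num : (1:ℝ) + 0 ≠ 0)).comp 0
      ((hasDerivAt_id (0:ℝ)).const_add 1)
    simpa [Function.comp_def] using this
  have hlog : (fun n : ℕ => Real.log (1 + t n) - t n) =o[atTop] t := by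
    have h1 := (hasDerivAt_iff_isLittleO.mp hD).comp_tendsto ht0
    simp only [Function.comp, add_zero, Real.log_one, smul_eq_mul, mul_one, sub_zero] at h1
    exact h1
  have hr : r =o[atTop] fun n : ℕ => (n:ℝ) ^ (-β) := by
    have hcomb := (hlog.trans_isBigO htO).add hterr
    refine hcomb.congr' ?_ EventuallyEq.rfl
    filter_upwards [eventually_ge_atTop 1] with n hn
    have hnpos : (0:ℝ) < n := by exact_mod_cast hn
    have h1t : 1 + t n = μ n / (c₁ * (n:ℝ) ^ (-α₁)) := by simp only [htdef]; ring
    have hden : (0:ℝ) < c₁ * (n:ℝ) ^ (-α₁) := by positivity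
    have hlog1t : Real.log (1 + t n)
        = Real.log (μ n) - (Real.log c₁ + (-α₁) * Real.log n) := by
      rw [h1t, Real.log_div (hpos n).ne' hden.ne', Real.log_mul hc1.ne'
        (Real.rpow_pos_of_pos hnpos _).ne', Real.log_rpow hnpos]
    simp only [hrdef]
    rw [hlog1t]
    ring
  have hE1 : (fun d : ℕ => (d:ℝ) * Real.log d - (∑ n ∈ Finset.Icc 1 d, Real.log n) - d)
      =o[atTop] fun d : ℕ => (d:ℝ) ^ (1 - β) := by
    refine IsBigO.trans_isLittleO ?_ (one_add_log_littleo ha)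
    rw [isBigO_iff]
    refine ⟨1, ?_⟩
    filter_upwards [eventually_ge_atTop 1] with d hd
    obtain ⟨hlo, hhi⟩ := sum_log_bounds hd
    have hlog0 : 0 ≤ Real.log d := Real.log_nonneg (by exact_mod_cast hd)
    rw [Real.norm_eq_abs, Real.norm_eq_abs, one_mul,
      abs_of_nonneg (show (0:ℝ) ≤ 1 + Real.log d by linarith), abs_le]
    constructor <;> linarith
  have hE2 : (fun d : ℕ => (∑ n ∈ Finset.Icc 1 d, ((n:ℝ)) ^ (-β)) - (d:ℝ) ^ (1 - β) / (1 - β))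
      =o[atTop] fun d : ℕ => (d:ℝ) ^ (1 - β) := by
    refine bounded_littleo_rpow ha (C := 1 + 1 / (1 - β)) ?_
    filter_upwards [eventually_ge_atTop 1] with d hd
    have hlo := le_sum_rpow hβ0 hβ1 hd
    have hhi := sum_rpow_le hβ0 hβ1 hd
    have hsplit : ((d:ℝ) ^ (1 - β) - 1) / (1 - β)
        = (d:ℝ) ^ (1 - β) / (1 - β) - 1 / (1 - β) := by ring
    have hainv : 0 < 1 / (1 - β) := by positivity
    rw [abs_le]
    constructor <;> [skip; skip] <;> rw [hsplit] at hlo hhi <;> linarith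
  have hE3 := sum_littleo hβ0 hβ1 hr
  have hE4 : (fun d : ℕ => (d:ℝ) * r d) =o[atTop] fun d : ℕ => (d:ℝ) ^ (1 - β) := by
    have hmul := (isBigO_refl (fun d : ℕ => (d:ℝ)) atTop).mul_isLittleO hr
    refine hmul.congr' EventuallyEq.rfl ?_
    filter_upwards [eventually_ge_atTop 1] with d hd
    have hdpos : (0:ℝ) < d := by exact_mod_cast hd
    rw [show (1:ℝ) - β = 1 + -β by ring, Real.rpow_add hdpos, Real.rpow_one]
  have hcomb := (((hE1.const_mul_left α₁).add (hE2.const_mul_left (c₂ / c₁))).add hE3).sub hE4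
  have hfinal := hcomb.const_mul_left (Real.log 2)⁻¹
  refine hfinal.congr' ?_ EventuallyEq.rfl
  filter_upwards [eventually_ge_atTop 1] with d hd
  have hdpos : (0:ℝ) < d := by exact_mod_cast hd
  have hP : (d:ℝ) * (d:ℝ) ^ (-β) = (d:ℝ) ^ (1 - β) := by
    rw [show (1:ℝ) - β = 1 + -β by ring, Real.rpow_add hdpos, Real.rpow_one]
  have hsum1 : ∑ n ∈ Finset.Icc 1 d, Real.logb 2 (μ n / μ d)
      = (∑ n ∈ Finset.Icc 1 d, Real.log (μ n)) / Real.log 2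
        - (d:ℝ) * (Real.log (μ d) / Real.log 2) := by
    have hterm : ∀ n ∈ Finset.Icc 1 d, Real.logb 2 (μ n / μ d)
        = Real.log (μ n) / Real.log 2 - Real.log (μ d) / Real.log 2 := by
      intro n _
      rw [Real.logb, Real.log_div (hpos n).ne' (hpos d).ne', sub_div]
    rw [Finset.sum_congr rfl hterm, Finset.sum_sub_distrib, Finset.sum_const, Nat.card_Icc,
      ← Finset.sum_div]
    simp [nsmul_eq_mul]
  have hsum2 : ∑ n ∈ Finset.Icc 1 d, Real.log (μ n)
      = (d:ℝ) * Real.log c₁ - α₁ * (∑ n ∈ Finset.Icc 1 d, Real.log n)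
        + (c₂ / c₁) * (∑ n ∈ Finset.Icc 1 d, ((n:ℝ)) ^ (-β))
        + ∑ n ∈ Finset.Icc 1 d, r n := by
    have hterm : ∀ n ∈ Finset.Icc 1 d, Real.log (μ n)
        = (Real.log c₁ - α₁ * Real.log n + (c₂ / c₁) * ((n:ℝ)) ^ (-β)) + r n := by
      intro n _
      simp only [hrdef]
      ring
    rw [Finset.sum_congr rfl hterm, Finset.sum_add_distrib, Finset.sum_add_distrib,
      Finset.sum_sub_distrib, Finset.sum_const, Nat.card_Icc, ← Finset.mul_sum, ← Finset.mul_sum]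
    simp [nsmul_eq_mul]
  have hmud : Real.log (μ d)
      = Real.log c₁ - α₁ * Real.log d + (c₂ / c₁) * ((d:ℝ)) ^ (-β) + r d := by
    simp only [hrdef]
    ring
  rw [hsum1, hsum2, hmud]
  linear_combination (c₂ / (c₁ * Real.log 2)) * hP
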